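/- Let L be a finite meet-distributive meet-semilattice with join-irreducibles P, and let α ∈ L with |N(α)| = i lower neighbors. Then for each k, the number of subsets A ⊆ ℓ(α) with |A| = k such that A ⊄ ℓ(q) for every q ∈ L with q < α equals the binomial coefficient C(|ℓ(α)| − i, k − i). -/

import Mathlib

open scoped Classical
set_option linter.unusedSectionVars false

/-- An element of a poset is *join-irreducible* if it covers exactly one element. -/
def JoinIrred {L : Type*} [Preorder L] (a : L) : Prop := ∃! b : L, b ⋖ a

/-- `ell α = {p ∈ P : p ≤ α}`, the set of join-irreducible elements below `α`. -/
def ell {L : Type*} [Preorder L] (a : L) : Set L := {p | JoinIrred p ∧ p ≤ a}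

/-- The set of join-irreducible elements. -/
def Pset (L : Type*) [Preorder L] : Set L := {p | JoinIrred p}

/-- The set `N(α)` of lower neighbors of `α`, as a finset. -/
noncomputable def NF {L : Type*} [Preorder L] [Fintype L] (a : L) : Finset L :=
  Finset.univ.filter (fun b => b ⋖ a)

/-- `ell` as a finset. -/
noncomputable def ellF {L : Type*} [Preorder L] [Fintype L] (a : L) : Finset L :=
  Finset.univ.filter (fun p => JoinIrred p ∧ p ≤ a)

/-- `α' = ⋀ N(α)`, the meet of all lower neighbors of `α` (with `α' = α` if `N(α) = ∅`). -/
noncomputable def lowMeet {L : Type*} [SemilatticeInf L] [Fintype L] (a : L) : L :=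
  if h : (NF a).Nonempty then (NF a).inf' h id else a

/-- `S(α) = ℓ(α) \ ℓ(α')`. -/
noncomputable def SF {L : Type*} [SemilatticeInf L] [Fintype L] (a : L) : Finset L :=
  ellF a \ ellF (lowMeet a)

/-- An interval `[γ, β]` is Boolean if it is order-isomorphic to some `2^[k]`. -/
def IsBooleanInterval {L : Type*} [Preorder L] (γ β : L) : Prop :=
  ∃ k : ℕ, Nonempty ((Set.Icc γ β) ≃o Set (Fin k))

/-- A poset is meet-distributive if each interval `[γ, β]` such that `γ` is the meet of
the lower neighbors of `β` in `[γ, β]` is Boolean. -/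
def MeetDistributive (L : Type*) [Preorder L] : Prop :=
  ∀ γ β : L, γ ≤ β → IsGLB {x | γ ≤ x ∧ x ⋖ β} γ → IsBooleanInterval γ β

/-- A pair `(A, B)` of subsets of `P` is independent if each `α` with `B ⊆ ℓ(α)`
satisfies `A ∩ ℓ(α) ≠ ∅`. -/
def Indep {L : Type*} [Preorder L] (A B : Set L) : Prop :=
  ∀ α : L, B ⊆ ell α → (A ∩ ell α).Nonempty

/-- `⟨B⟩`, the poset ideal of `P` generated by `B ⊆ P`. -/
def idealGen {L : Type*} [Preorder L] (B : Set L) : Set L :=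
  {p | JoinIrred p ∧ ∃ q ∈ B, p ≤ q}

/-- `M(B)`, the set of maximal elements of `B`. -/
def maxElems {L : Type*} [Preorder L] (B : Set L) : Set L :=
  {b ∈ B | ∀ c ∈ B, b ≤ c → c = b}

section Aux

variable {L : Type*} [SemilatticeInf L] [Fintype L]

lemma mem_ellF {a p : L} : p ∈ ellF a ↔ JoinIrred p ∧ p ≤ a := by
  simp [ellF]

lemma mem_NF {a b : L} : b ∈ NF a ↔ b ⋖ a := by simp [NF]

lemma lowMeet_le_cov {a r : L} (hr : r ⋖ a) : lowMeet a ≤ r := by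
  have hne : (NF a).Nonempty := ⟨r, mem_NF.2 hr⟩
  rw [lowMeet, dif_pos hne]
  exact Finset.inf'_le _ (mem_NF.2 hr)

lemma lowMeet_le (a : L) : lowMeet a ≤ a := by
  rw [lowMeet]
  split_ifs with hne
  · obtain ⟨r, hr⟩ := hne
    exact (Finset.inf'_le _ hr).trans (mem_NF.1 hr).le
  · exact le_rfl

lemma le_lowMeet {a x : L} (hne : (NF a).Nonempty) (hx : ∀ r, r ⋖ a → x ≤ r) :
    x ≤ lowMeet a := by
  rw [lowMeet, dif_pos hne]
  exact Finset.le_inf' _ _ fun r hr => hx r (mem_NF.1 hr)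

lemma isGLB_lowMeet {a : L} (hne : (NF a).Nonempty) :
    IsGLB {x | lowMeet a ≤ x ∧ x ⋖ a} (lowMeet a) := by
  constructor
  · intro x hx; exact hx.1
  · intro b hb
    exact le_lowMeet hne fun r hr => hb ⟨lowMeet_le_cov hr, hr⟩

lemma icc_covBy_iff {γ β : L} {x y : Set.Icc γ β} : x ⋖ y ↔ (x : L) ⋖ (y : L) := by
  constructor
  · intro hxy
    refine ⟨Subtype.coe_lt_coe.2 hxy.lt, ?_⟩
    intro z h1 h2
    have hz : z ∈ Set.Icc γ β := ⟨x.2.1.trans h1.le, h2.le.trans y.2.2⟩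
    exact hxy.2 (show x < (⟨z, hz⟩ : Set.Icc γ β) from h1) h2
  · intro hxy
    refine ⟨hxy.lt, ?_⟩
    intro z h1 h2
    exact hxy.2 (show (x : L) < (z : L) from h1) (show (z : L) < (y : L) from h2)

lemma key (h : MeetDistributive L) {β r s : L} (hr : r ⋖ β) (hs : s ⋖ β) (hrs : r ≠ s) :
    (r ⊓ s ⋖ s) ∧ (∀ u, r ≤ u → s ≤ u → β ≤ u) ∧
      (∀ t, t ⋖ β → t ≠ r → t ≠ s → r ⊓ s ≠ t ⊓ s) := by
  have hne : (NF β).Nonempty := ⟨r, mem_NF.2 hr⟩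
  have hγβ : lowMeet β ≤ β := lowMeet_le β
  obtain ⟨m, ⟨e⟩⟩ := h (lowMeet β) β hγβ (isGLB_lowMeet hne)
  set γ := lowMeet β with hγdef
  have memβ : β ∈ Set.Icc γ β := ⟨hγβ, le_rfl⟩
  have memcov : ∀ {x : L}, x ⋖ β → x ∈ Set.Icc γ β := fun hx => ⟨lowMeet_le_cov hx, hx.le⟩
  have hBtop : ∀ x : Set.Icc γ β, x ≤ (⟨β, memβ⟩ : Set.Icc γ β) := fun x => x.2.2
  have etop : e ⟨β, memβ⟩ = Set.univ := by
    apply Set.eq_univ_of_univ_subset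
    calc Set.univ = e (e.symm Set.univ) := (e.apply_symm_apply _).symm
      _ ⊆ e ⟨β, memβ⟩ := e.monotone (hBtop _)
  have covmap : ∀ {x : L} (hx : x ⋖ β), ∃ a : Fin m, e ⟨x, memcov hx⟩ = {a}ᶜ := by
    intro x hx
    have h1 : (⟨x, memcov hx⟩ : Set.Icc γ β) ⋖ ⟨β, memβ⟩ := icc_covBy_iff.2 hx
    have h2 : e ⟨x, memcov hx⟩ ⋖ e ⟨β, memβ⟩ := (apply_covBy_apply_iff e).2 h1
    rw [etop] at h2
    obtain ⟨a, _, ha⟩ := h2.exists_set_sdiff_singleton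
    exact ⟨a, by rw [← ha, Set.compl_eq_univ_diff]⟩
  have meminf : ∀ {x y : L}, x ∈ Set.Icc γ β → y ∈ Set.Icc γ β → x ⊓ y ∈ Set.Icc γ β :=
    fun hx hy => ⟨le_inf hx.1 hy.1, inf_le_left.trans hx.2⟩
  have infmap : ∀ {x y : L} (hx : x ∈ Set.Icc γ β) (hy : y ∈ Set.Icc γ β),
      e ⟨x ⊓ y, meminf hx hy⟩ = e ⟨x, hx⟩ ∩ e ⟨y, hy⟩ := by
    intro x y hx hy
    apply subset_antisymm
    · exact Set.subset_inter
        (e.monotone (show ((⟨x ⊓ y, meminf hx hy⟩ : Set.Icc γ β)) ≤ ⟨x, hx⟩ from inf_le_left))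
        (e.monotone (show ((⟨x ⊓ y, meminf hx hy⟩ : Set.Icc γ β)) ≤ ⟨y, hy⟩ from inf_le_right))
    · set w := e.symm (e ⟨x, hx⟩ ∩ e ⟨y, hy⟩) with hwdef
      have hwx : w ≤ ⟨x, hx⟩ := by
        rw [← e.le_iff_le, e.apply_symm_apply]; exact Set.inter_subset_left
      have hwy : w ≤ ⟨y, hy⟩ := by
        rw [← e.le_iff_le, e.apply_symm_apply]; exact Set.inter_subset_right
      have hw : w ≤ ⟨x ⊓ y, meminf hx hy⟩ :=
        Subtype.coe_le_coe.1 (le_inf (Subtype.coe_le_coe.2 hwx) (Subtype.coe_le_coe.2 hwy))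
      calc e ⟨x, hx⟩ ∩ e ⟨y, hy⟩ = e w := (e.apply_symm_apply _).symm
        _ ⊆ e ⟨x ⊓ y, meminf hx hy⟩ := e.monotone hw
  obtain ⟨a, ha⟩ := covmap hr
  obtain ⟨b, hb⟩ := covmap hs
  have hab : a ≠ b := by
    intro hab
    apply hrs
    have h1 : (⟨r, memcov hr⟩ : Set.Icc γ β) = ⟨s, memcov hs⟩ :=
      e.injective (by rw [ha, hb, hab])
    exact congrArg Subtype.val h1
  refine ⟨?_, ?_, ?_⟩
  · -- r ⊓ s ⋖ s
    have hins : insert a ({a}ᶜ ∩ {b}ᶜ : Set (Fin m)) = {b}ᶜ := by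
      ext x
      by_cases hxa : x = a <;> by_cases hxb : x = b <;>
        simp [hxa, hxb, hab] at * <;> tauto
    have hcovset : ({a}ᶜ ∩ {b}ᶜ : Set (Fin m)) ⋖ ({b}ᶜ : Set (Fin m)) := by
      have := Set.covBy_insert (a := a) (s := ({a}ᶜ ∩ {b}ᶜ : Set (Fin m))) (by simp)
      rwa [hins] at this
    have h2 : (⟨r ⊓ s, meminf (memcov hr) (memcov hs)⟩ : Set.Icc γ β) ⋖ ⟨s, memcov hs⟩ := by
      apply (apply_covBy_apply_iff e).1
      rw [infmap (memcov hr) (memcov hs), ha, hb]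
      exact hcovset
    exact icc_covBy_iff.1 h2
  · -- two covers force top
    intro u hru hsu
    have hmem : u ⊓ β ∈ Set.Icc γ β := ⟨le_inf ((lowMeet_le_cov hr).trans hru) hγβ, inf_le_right⟩
    have hRu : (⟨r, memcov hr⟩ : Set.Icc γ β) ≤ ⟨u ⊓ β, hmem⟩ := by
      exact Subtype.coe_le_coe.1 (le_inf hru hr.le)
    have hSu : (⟨s, memcov hs⟩ : Set.Icc γ β) ≤ ⟨u ⊓ β, hmem⟩ := by
      exact Subtype.coe_le_coe.1 (le_inf hsu hs.le)
    have h2 : Set.univ ⊆ e ⟨u ⊓ β, hmem⟩ := by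
      intro x _
      by_cases hxa : x = a
      · apply e.monotone hSu
        rw [hb]
        simp [hxa, hab]
      · apply e.monotone hRu
        rw [ha]
        simp [hxa]
    have h3 : (⟨u ⊓ β, hmem⟩ : Set.Icc γ β) = ⟨β, memβ⟩ :=
      e.injective (by rw [etop]; exact (Set.eq_univ_of_univ_subset h2))
    have h4 : u ⊓ β = β := congrArg Subtype.val h3
    exact inf_eq_right.1 h4
  · -- distinct meets
    intro t ht htr hts heq
    obtain ⟨c, hc⟩ := covmap ht
    have hca : c ≠ a := by
      intro hca
      exact htr (congrArg Subtype.val (e.injective (by rw [ha, hc, hca]) :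
        (⟨t, memcov ht⟩ : Set.Icc γ β) = ⟨r, memcov hr⟩))
    have h1 : e ⟨r ⊓ s, meminf (memcov hr) (memcov hs)⟩
        = e ⟨t ⊓ s, meminf (memcov ht) (memcov hs)⟩ := by
      congr 1
      exact Subtype.ext heq
    rw [infmap (memcov hr) (memcov hs), infmap (memcov ht) (memcov hs), ha, hb, hc] at h1
    have hmem2 : a ∈ ({c}ᶜ ∩ {b}ᶜ : Set (Fin m)) := by
      simp [Ne.symm hca, hab]
    rw [← h1] at hmem2
    simp at hmem2

lemma exists_joinIrred (h : MeetDistributive L) {β r : L} (hr : r ⋖ β) :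
    ∃ p : L, JoinIrred p ∧ p ≤ β ∧ ¬p ≤ r := by
  obtain ⟨p, -, hp⟩ := exists_minimal_le_of_wellFoundedLT
    (P := fun x : L => x ≤ β ∧ ¬x ≤ r) (a := β) ⟨le_rfl, hr.lt.not_ge⟩
  obtain ⟨⟨hpβ, hpr⟩, hmin⟩ := hp
  have hlow : ∀ c : L, c < p → c ≤ r := by
    intro c hc
    by_contra hcr
    exact hc.not_ge (hmin ⟨hc.le.trans hpβ, hcr⟩ hc.le)
  have hpr' : p ⊓ r < p :=
    lt_of_le_of_ne inf_le_left (fun hc => hpr (inf_eq_left.1 hc))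
  obtain ⟨c, -, hc⟩ := exists_le_covBy_of_lt hpr'
  refine ⟨p, ⟨c, hc, ?_⟩, hpβ, hpr⟩
  intro c' hc'
  by_contra hne
  exact hpr ((key h hc' hc hne).2.1 r (hlow c' hc'.lt) (hlow c hc.lt))

lemma uniq (h : MeetDistributive L) :
    ∀ α r p p' : L, r ⋖ α → JoinIrred p → p ≤ α → ¬p ≤ r →
      JoinIrred p' → p' ≤ α → ¬p' ≤ r → p = p' := by
  intro α
  induction α using WellFoundedLT.induction with
  | ind α IH =>
  intro r p p' hr hp hpα hpr hp' hp'α hp'r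
  by_cases hpeq : p = α
  · subst hpeq
    obtain ⟨b, hb, hbu⟩ := hp
    have hrb : r = b := hbu r hr
    rcases eq_or_lt_of_le hp'α with h1 | h1
    · exact h1.symm
    · obtain ⟨r₂, hle, hcov⟩ := exists_le_covBy_of_lt h1
      have h2 : r₂ = r := (hbu r₂ hcov).trans hrb.symm
      exact absurd (h2 ▸ hle) hp'r
  by_cases hp'eq : p' = α
  · subst hp'eq
    obtain ⟨b, hb, hbu⟩ := hp'
    have hrb : r = b := hbu r hr
    have h1 : p < p' := lt_of_le_of_ne hpα hpeq
    obtain ⟨r₂, hle, hcov⟩ := exists_le_covBy_of_lt h1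
    have h2 : r₂ = r := (hbu r₂ hcov).trans hrb.symm
    exact absurd (h2 ▸ hle) hpr
  have hpl : p < α := lt_of_le_of_ne hpα hpeq
  have hp'l : p' < α := lt_of_le_of_ne hp'α hp'eq
  obtain ⟨r', hpr', hr'⟩ := exists_le_covBy_of_lt hpl
  have hrr' : r ≠ r' := fun hcon => hpr (by rw [hcon]; exact hpr')
  by_cases hc : p' ≤ r'
  · have ht : r ⊓ r' ⋖ r' := (key h hr hr' hrr').1
    refine IH r' hr'.lt (r ⊓ r') p p' ht hp hpr'
      (fun hcon => hpr (hcon.trans inf_le_left)) hp' hc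
      (fun hcon => hp'r (hcon.trans inf_le_left))
  · exfalso
    obtain ⟨s, hp's, hscov⟩ := exists_le_covBy_of_lt hp'l
    have hsr : s ≠ r := fun hcon => hp'r (hcon ▸ hp's)
    have hsr' : s ≠ r' := fun hcon => hc (hcon ▸ hp's)
    have ht : r ⊓ s ⋖ s := (key h hr hscov (Ne.symm hsr)).1
    have ht' : r' ⊓ s ⋖ s := (key h hr' hscov (Ne.symm hsr')).1
    have htt' : r ⊓ s ≠ r' ⊓ s :=
      (key h hr hscov (Ne.symm hsr)).2.2 r' hr' (Ne.symm hrr') (Ne.symm hsr')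
    have hw : (r ⊓ s) ⊓ (r' ⊓ s) ⋖ r' ⊓ s := (key h ht ht' htt').1
    obtain ⟨z, hz, hzt', hzw⟩ := exists_joinIrred h hw
    have hzs : z ≤ s := hzt'.trans inf_le_right
    have hzt : ¬ z ≤ r ⊓ s := fun hcon => hzw (le_inf hcon hzt')
    have hp't : ¬ p' ≤ r ⊓ s := fun hcon => hp'r (hcon.trans inf_le_left)
    have hzp' : z = p' := IH s hscov.lt (r ⊓ s) z p' ht hz hzs hzt hp' hp's hp't
    exact hc (hzp' ▸ (hzt'.trans inf_le_left))

lemma avoid_two (h : MeetDistributive L) {α r r' q : L} (hr : r ⋖ α) (hr' : r' ⋖ α)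
    (hrr : r ≠ r') (hq : JoinIrred q) (hqα : q ≤ α) (h1 : ¬q ≤ r) (h2 : ¬q ≤ r') : False := by
  have hqlt : q < α := by
    rcases lt_or_eq_of_le hqα with hl | he
    · exact hl
    · exfalso
      obtain ⟨b, hb, hbu⟩ := hq
      have e1 : r = b := hbu r (by rw [he]; exact hr)
      have e2 : r' = b := hbu r' (by rw [he]; exact hr')
      exact hrr (e1.trans e2.symm)
  obtain ⟨s, hqs, hscov⟩ := exists_le_covBy_of_lt hqlt
  have hsr : s ≠ r := fun hcon => h1 (hcon ▸ hqs)
  have hsr' : s ≠ r' := fun hcon => h2 (hcon ▸ hqs)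
  have ht : r ⊓ s ⋖ s := (key h hr hscov (Ne.symm hsr)).1
  have ht' : r' ⊓ s ⋖ s := (key h hr' hscov (Ne.symm hsr')).1
  have htt' : r ⊓ s ≠ r' ⊓ s :=
    (key h hr hscov (Ne.symm hsr)).2.2 r' hr' (Ne.symm hrr) (Ne.symm hsr')
  have hw : (r ⊓ s) ⊓ (r' ⊓ s) ⋖ r' ⊓ s := (key h ht ht' htt').1
  obtain ⟨z, hz, hzt', hzw⟩ := exists_joinIrred h hw
  have hzs : z ≤ s := hzt'.trans inf_le_right
  have hzt : ¬ z ≤ r ⊓ s := fun hcon => hzw (le_inf hcon hzt')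
  have hqt : ¬ q ≤ r ⊓ s := fun hcon => h1 (hcon.trans inf_le_left)
  have hzq : z = q := uniq h s (r ⊓ s) z q ht hz hzs hzt hq hqs hqt
  exact h2 (hzq ▸ (hzt'.trans inf_le_left))

lemma card_SF (h : MeetDistributive L) (α : L) : (SF α).card = (NF α).card := by
  rcases Finset.eq_empty_or_nonempty (NF α) with hemp | hne
  · have hlow : lowMeet α = α := by
      rw [lowMeet, dif_neg (by rw [hemp]; exact Finset.not_nonempty_empty)]
    rw [hemp, Finset.card_empty, SF, hlow, Finset.sdiff_self, Finset.card_empty]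
  · refine (Finset.card_bij
      (fun r hr => Classical.choose (exists_joinIrred h (mem_NF.1 hr))) ?_ ?_ ?_).symm
    · intro r hr
      obtain ⟨h1, h2, h3⟩ := Classical.choose_spec (exists_joinIrred h (mem_NF.1 hr))
      rw [SF, Finset.mem_sdiff, mem_ellF, mem_ellF]
      exact ⟨⟨h1, h2⟩, fun hcon => h3 (hcon.2.trans (lowMeet_le_cov (mem_NF.1 hr)))⟩
    · intro r₁ hr₁ r₂ hr₂ heq
      by_contra hne'
      obtain ⟨h1, h2, h3⟩ := Classical.choose_spec (exists_joinIrred h (mem_NF.1 hr₁))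
      obtain ⟨h1', h2', h3'⟩ := Classical.choose_spec (exists_joinIrred h (mem_NF.1 hr₂))
      exact avoid_two h (mem_NF.1 hr₁) (mem_NF.1 hr₂) hne' h1 h2 h3
        (heq ▸ h3')
    · intro p hp
      rw [SF, Finset.mem_sdiff, mem_ellF, mem_ellF] at hp
      obtain ⟨⟨hpj, hpα⟩, hnp⟩ := hp
      have hnlow : ¬ p ≤ lowMeet α := fun hcon => hnp ⟨hpj, hcon⟩
      have hex : ∃ r ∈ NF α, ¬ p ≤ r := by
        by_contra hcon
        push_neg at hcon
        exact hnlow (le_lowMeet hne fun r hr => hcon r (mem_NF.2 hr))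
      obtain ⟨r, hrm, hpr⟩ := hex
      refine ⟨r, hrm, ?_⟩
      obtain ⟨h1, h2, h3⟩ := Classical.choose_spec (exists_joinIrred h (mem_NF.1 hrm))
      exact uniq h α r _ p (mem_NF.1 hrm) h1 h2 h3 hpj hpα hpr

lemma char_newface (h : MeetDistributive L) {α : L} {A : Finset L} (hA : A ⊆ ellF α) :
    (∀ q : L, q < α → ¬ A ⊆ ellF q) ↔ SF α ⊆ A := by
  constructor
  · intro hno p hp
    rw [SF, Finset.mem_sdiff, mem_ellF, mem_ellF] at hp
    obtain ⟨⟨hpj, hpα⟩, hnp⟩ := hp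
    have hnlow : ¬ p ≤ lowMeet α := fun hcon => hnp ⟨hpj, hcon⟩
    have hne : (NF α).Nonempty := by
      by_contra hc
      rw [Finset.not_nonempty_iff_eq_empty] at hc
      apply hnlow
      rw [lowMeet, dif_neg (by rw [hc]; exact Finset.not_nonempty_empty)]
      exact hpα
    have hex : ∃ r ∈ NF α, ¬ p ≤ r := by
      by_contra hcon
      push_neg at hcon
      exact hnlow (le_lowMeet hne fun r hr => hcon r (mem_NF.2 hr))
    obtain ⟨r, hrm, hpr⟩ := hex
    have hrcov := mem_NF.1 hrm
    by_contra hpA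
    apply hno r hrcov.lt
    intro x hx
    have hxα := hA hx
    rw [mem_ellF] at hxα ⊢
    refine ⟨hxα.1, ?_⟩
    by_contra hxr
    exact hpA ((uniq h α r x p hrcov hxα.1 hxα.2 hxr hpj hpα hpr) ▸ hx)
  · intro hQA q hq hAq
    obtain ⟨r, hqr, hrcov⟩ := exists_le_covBy_of_lt hq
    obtain ⟨p, hpj, hpα, hpr⟩ := exists_joinIrred h hrcov
    have hpS : p ∈ SF α := by
      rw [SF, Finset.mem_sdiff, mem_ellF, mem_ellF]
      exact ⟨⟨hpj, hpα⟩, fun hcon => hpr (hcon.2.trans (lowMeet_le_cov hrcov))⟩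
    have hmem := hAq (hQA hpS)
    rw [mem_ellF] at hmem
    exact hpr (hmem.2.trans hqr)

lemma count_sup (s t : Finset L) (hts : t ⊆ s) (k : ℕ) :
    (s.powerset.filter (fun A => A.card = k ∧ t ⊆ A)).card =
      if t.card ≤ k then (s.card - t.card).choose (k - t.card) else 0 := by
  split_ifs with hik
  · have hcard : (s \ t).card = s.card - t.card := Finset.card_sdiff_of_subset hts
    rw [← hcard, ← Finset.card_powersetCard]
    refine Finset.card_bij' (fun A _ => A \ t) (fun B _ => B ∪ t) ?_ ?_ ?_ ?_
    · intro A hA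
      rw [Finset.mem_filter, Finset.mem_powerset] at hA
      obtain ⟨hAs, hAk, htA⟩ := hA
      rw [Finset.mem_powersetCard]
      exact ⟨Finset.sdiff_subset_sdiff hAs le_rfl, by rw [Finset.card_sdiff_of_subset htA, hAk]⟩
    · intro B hB
      rw [Finset.mem_powersetCard] at hB
      obtain ⟨hBs, hBk⟩ := hB
      have hd : Disjoint B t := Finset.sdiff_disjoint.mono_left hBs
      rw [Finset.mem_filter, Finset.mem_powerset]
      refine ⟨Finset.union_subset (hBs.trans Finset.sdiff_subset) hts, ?_,
        Finset.subset_union_right⟩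
      rw [Finset.card_union_of_disjoint hd, hBk]
      omega
    · intro A hA
      rw [Finset.mem_filter, Finset.mem_powerset] at hA
      exact Finset.sdiff_union_of_subset hA.2.2
    · intro B hB
      rw [Finset.mem_powersetCard] at hB
      have hd : Disjoint B t := Finset.sdiff_disjoint.mono_left hB.1
      show (B ∪ t) \ t = B
      rw [Finset.union_sdiff_distrib, Finset.sdiff_self, Finset.union_empty,
        Finset.sdiff_eq_self_of_disjoint hd]
  · rw [Finset.card_eq_zero, Finset.filter_eq_empty_iff]
    rintro A hA ⟨hAk, htA⟩
    exact hik (hAk ▸ Finset.card_le_card htA)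

end Aux

/-- the number of `A ⊆ ℓ(α)` with `|A| = k` contained in no `ℓ(q)`
with `q < α` is `C(|ℓ(α)| − i, k − i)` where `i = |N(α)|`. -/
theorem count_new_faces {L : Type*} [SemilatticeInf L] [Fintype L]
    (h : MeetDistributive L) (α : L) (i k : ℕ) (hi : (NF α).card = i) :
    ((ellF α).powerset.filter
      (fun A => A.card = k ∧ ∀ q : L, q < α → ¬ A ⊆ ellF q)).card =
    if i ≤ k then ((ellF α).card - i).choose (k - i) else 0 := by
  subst hi
  have hfe : (ellF α).powerset.filter
        (fun A => A.card = k ∧ ∀ q : L, q < α → ¬ A ⊆ ellF q)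
      = (ellF α).powerset.filter (fun A => A.card = k ∧ SF α ⊆ A) := by
    apply Finset.filter_congr
    intro A hA
    rw [Finset.mem_powerset] at hA
    exact and_congr Iff.rfl (char_newface h hA)
  have hsub : SF α ⊆ ellF α := by
    rw [SF]; exact Finset.sdiff_subset
  rw [hfe, count_sup (ellF α) (SF α) hsub k, card_SF h α]
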